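/- Let γ = (γ_n)_{n∈ℤ₊} be a real sequence satisfying γ_{n+1} = Σ_{j=0}^{r-1} a_j γ_{n-j} for all n ≥ r-1, with a_{r-1} ≠ 0. If the Hankel matrix M_{r-1}(2n_0) = (γ_{2n_0+i+j})_{0≤i,j≤r-1} is positive semidefinite for some n_0 ≥ 0, then M_n(0) = (γ_{i+j})_{0≤i,j≤n} is positive semidefinite for every n ≥ 0 (i.e., the infinite Hankel matrix (γ_{i+j})_{i,j≥0} is positive semidefinite). -/

import Mathlib

open Polynomial Finset Matrix

/-- The moment-like linear functional `L(∑ cᵢ Xⁱ) = ∑ cᵢ γᵢ`. -/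
noncomputable def hankelL (γ : ℕ → ℝ) (p : Polynomial ℝ) : ℝ :=
  p.sum fun i c => c * γ i

lemma hankelL_add (γ : ℕ → ℝ) (p q : Polynomial ℝ) :
    hankelL γ (p + q) = hankelL γ p + hankelL γ q :=
  Polynomial.sum_add_index p q _ (fun _ => zero_mul _) (fun _ a b => add_mul a b _)

lemma hankelL_monomial (γ : ℕ → ℝ) (n : ℕ) (c : ℝ) :
    hankelL γ (monomial n c) = c * γ n :=
  Polynomial.sum_monomial_index c _ (zero_mul _)

lemma hankelL_smul (γ : ℕ → ℝ) (b : ℝ) (p : Polynomial ℝ) :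
    hankelL γ (b • p) = b * hankelL γ p := by
  unfold hankelL
  rw [Polynomial.sum_smul_index p b (fun i c => c * γ i) (fun i => zero_mul _),
    Polynomial.sum_def, Polynomial.sum_def, Finset.mul_sum]
  refine Finset.sum_congr rfl fun i _ => by ring

lemma hankelL_C_mul (γ : ℕ → ℝ) (b : ℝ) (p : Polynomial ℝ) :
    hankelL γ (C b * p) = b * hankelL γ p := by
  rw [← smul_eq_C_mul, hankelL_smul]

lemma hankelL_sum (γ : ℕ → ℝ) {ι : Type*} (s : Finset ι) (f : ι → Polynomial ℝ) :
    hankelL γ (∑ i ∈ s, f i) = ∑ i ∈ s, hankelL γ (f i) := by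
  classical
  induction s using Finset.induction with
  | empty => simp [hankelL]
  | insert _ _ hx ih => rw [Finset.sum_insert hx, Finset.sum_insert hx, hankelL_add, ih]

lemma hankelL_sub (γ : ℕ → ℝ) (p q : Polynomial ℝ) :
    hankelL γ (p - q) = hankelL γ p - hankelL γ q := by
  have h := hankelL_add γ (p - q) q
  rw [sub_add_cancel] at h
  linarith

/-- The key bilinear expansion of `L(X^k·p·q)` for vector-built polynomials. -/
lemma hankelL_shift_mul (γ : ℕ → ℝ) (k N M : ℕ) (v : Fin N → ℝ) (w : Fin M → ℝ) :
    hankelL γ (X ^ k * ((∑ i : Fin N, monomial (i : ℕ) (v i)) *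
        (∑ j : Fin M, monomial (j : ℕ) (w j)))) =
      ∑ i : Fin N, ∑ j : Fin M, v i * w j * γ (k + (i : ℕ) + (j : ℕ)) := by
  rw [Finset.sum_mul_sum, Finset.mul_sum, hankelL_sum]
  refine Finset.sum_congr rfl fun i _ => ?_
  rw [Finset.mul_sum, hankelL_sum]
  refine Finset.sum_congr rfl fun j _ => ?_
  simp only [X_pow_eq_monomial, monomial_mul_monomial, hankelL_monomial, one_mul, add_assoc]


/-- Let `γ` be a real sequence with `γ_{n+1} = Σ_{j=0}^{r-1} a_j γ_{n-j}`
for all `n ≥ r-1` and `a_{r-1} ≠ 0`.  If the Hankel matrix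
`M_{r-1}(2n_0) = (γ_{2n_0+i+j})_{0≤i,j≤r-1}` is positive semidefinite for some `n_0 ≥ 0`,
then `M_n(0) = (γ_{i+j})_{0≤i,j≤n}` is positive semidefinite for every `n ≥ 0` (i.e. the
infinite Hankel matrix `(γ_{i+j})` is positive semidefinite). -/
theorem stmt_11 (r : ℕ) (hr : 0 < r) (γ : ℕ → ℝ) (a : Fin r → ℝ)
    (ha : a ⟨r - 1, by omega⟩ ≠ 0)
    (hrec : ∀ n : ℕ, r - 1 ≤ n → γ (n + 1) = ∑ j : Fin r, a j * γ (n - (j : ℕ)))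
    (n0 : ℕ)
    (hpsd : (Matrix.of fun i j : Fin (r - 1 + 1) =>
        γ (2 * n0 + (i : ℕ) + (j : ℕ))).PosSemidef) :
    ∀ n : ℕ, (Matrix.of fun i j : Fin (n + 1) => γ ((i : ℕ) + (j : ℕ))).PosSemidef := by
  classical
  -- the characteristic polynomial of the recurrence
  set S : Polynomial ℝ := ∑ j : Fin r, C (a j) * X ^ (r - 1 - (j : ℕ)) with hS
  set c : Polynomial ℝ := X ^ r - S with hc
  have hSdeg : S.degree < (r : ℕ) := by
    refine lt_of_le_of_lt (Polynomial.degree_sum_le _ _) ?_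
    rw [Finset.sup_lt_iff (by exact_mod_cast WithBot.bot_lt_coe r)]
    intro j _
    refine lt_of_le_of_lt (degree_C_mul_X_pow_le _ _) ?_
    have hj := j.isLt
    exact_mod_cast (by omega : r - 1 - (j : ℕ) < r)
  have hmonic : c.Monic := monic_X_pow_sub hSdeg
  have hcdeg : c.degree = (r : ℕ) := by
    rw [hc, degree_sub_eq_left_of_degree_lt (by rwa [degree_X_pow]), degree_X_pow]
  -- L annihilates X^m * c
  have hannX : ∀ m : ℕ, hankelL γ (X ^ m * c) = 0 := by
    intro m
    have hx : X ^ m * c =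
        monomial (m + r) 1 - ∑ j : Fin r, monomial (m + (r - 1 - (j : ℕ))) (a j) := by
      rw [hc, hS, mul_sub, Finset.mul_sum, ← pow_add, X_pow_eq_monomial]
      congr 1
      refine Finset.sum_congr rfl fun j _ => ?_
      rw [C_mul_X_pow_eq_monomial, X_pow_eq_monomial, monomial_mul_monomial, one_mul]
    have hrw := hrec (m + r - 1) (by omega)
    rw [show m + r - 1 + 1 = m + r by omega] at hrw
    rw [hx, hankelL_sub, hankelL_monomial, hankelL_sum, one_mul, hrw, sub_eq_zero]
    refine Finset.sum_congr rfl fun j _ => ?_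
    rw [hankelL_monomial]
    have hj := j.isLt
    congr 2
    omega
  -- L annihilates all multiples of c
  have hann : ∀ s : Polynomial ℝ, hankelL γ (c * s) = 0 := by
    intro s
    conv_lhs => rw [s.as_sum_range]
    rw [Finset.mul_sum, hankelL_sum]
    refine Finset.sum_eq_zero fun m _ => ?_
    have hms : c * monomial m (s.coeff m) = C (s.coeff m) * (X ^ m * c) := by
      rw [← C_mul_X_pow_eq_monomial]; ring
    rw [hms, hankelL_C_mul, hannX, mul_zero]
  -- constant coefficient of c is nonzero
  have hc0 : c.coeff 0 = -a ⟨r - 1, by omega⟩ := by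
    have hSc : S.coeff 0 = a ⟨r - 1, by omega⟩ := by
      rw [hS, Polynomial.finset_sum_coeff]
      rw [Finset.sum_eq_single (⟨r - 1, by omega⟩ : Fin r)]
      · simp [coeff_C_mul, coeff_X_pow]
      · intro j _ hj
        have hj1 := j.isLt
        have hj2 : (j : ℕ) ≠ r - 1 := fun h => hj (Fin.ext h)
        simp only [coeff_C_mul, coeff_X_pow]
        rw [if_neg (by omega : ¬ 0 = r - 1 - (j : ℕ)), mul_zero]
      · simp
    rw [hc, Polynomial.coeff_sub, Polynomial.coeff_X_pow, if_neg (by omega : ¬ 0 = r), hSc,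
      zero_sub]
  have hc0ne : c.coeff 0 ≠ 0 := by rw [hc0]; simpa using ha
  -- X is invertible modulo c
  set d : Polynomial ℝ := C (-(c.coeff 0)⁻¹) * c.divX with hd
  have h1 : X * c.divX = c - C (c.coeff 0) := by
    rw [eq_sub_iff_add_eq, Polynomial.X_mul_divX_add]
  have h2 : C ((c.coeff 0)⁻¹) * C (c.coeff 0) = 1 := by
    rw [← C_mul, inv_mul_cancel₀ hc0ne, C_1]
  have hXd : 1 - X * d = C ((c.coeff 0)⁻¹) * c := by
    rw [hd, map_neg]
    linear_combination C ((c.coeff 0)⁻¹) * h1 - h2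
  have hXdvd : c ∣ 1 - X * d := ⟨C ((c.coeff 0)⁻¹), by rw [hXd]; ring⟩
  have hpow : ∀ m : ℕ, c ∣ 1 - (X * d) ^ m := by
    intro m
    induction m with
    | zero => simp
    | succ m ih =>
      have hstep : 1 - (X * d) ^ (m + 1) = (1 - (X * d) ^ m) * (X * d) + (1 - X * d) := by
        ring
      rw [hstep]
      exact dvd_add (ih.mul_right _) hXdvd
  -- the key positivity claim for squares
  have key : ∀ p : Polynomial ℝ, 0 ≤ hankelL γ (p * p) := by
    intro p
    set q : Polynomial ℝ := (d ^ n0 * p) %ₘ c with hqdef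
    obtain ⟨u, hu⟩ := hpow n0
    have hmod : q + c * ((d ^ n0 * p) /ₘ c) = d ^ n0 * p := modByMonic_add_div _ c
    have hdvd2 : p - X ^ n0 * q = c * (p * u + X ^ n0 * ((d ^ n0 * p) /ₘ c)) := by
      linear_combination p * hu - X ^ n0 * hmod
    have ht : p = X ^ n0 * q + c * (p * u + X ^ n0 * ((d ^ n0 * p) /ₘ c)) := by
      linear_combination hdvd2
    set t : Polynomial ℝ := p * u + X ^ n0 * ((d ^ n0 * p) /ₘ c) with htdef
    have hsq : p * p = X ^ (2 * n0) * (q * q) + c * (2 * (X ^ n0 * q * t) + c * (t * t)) := by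
      rw [ht]; ring
    have hLsq : hankelL γ (p * p) = hankelL γ (X ^ (2 * n0) * (q * q)) := by
      rw [hsq, hankelL_add, hann, add_zero]
    -- degree bound for q
    have hqdeg : q.natDegree < r - 1 + 1 := by
      by_cases hq0 : q = 0
      · rw [hq0]; simp
      · have hlt : q.degree < ((r - 1 + 1 : ℕ) : WithBot ℕ) := by
          have hh := degree_modByMonic_lt (d ^ n0 * p) hmonic
          rw [hcdeg] at hh
          exact_mod_cast (by exact_mod_cast hh : q.degree < ((r : ℕ) : WithBot ℕ)).trans_le
            (by exact_mod_cast (by omega : r ≤ r - 1 + 1))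
        exact (Polynomial.natDegree_lt_iff_degree_lt hq0).mpr hlt
    set w : Fin (r - 1 + 1) → ℝ := fun i => q.coeff (i : ℕ) with hwdef
    have hqsum : q = ∑ i : Fin (r - 1 + 1), monomial (i : ℕ) (w i) := by
      conv_lhs => rw [q.as_sum_range' (r - 1 + 1) hqdeg]
      rw [Fin.sum_univ_eq_sum_range (fun i => monomial i (q.coeff i)) (r - 1 + 1)]
    have h2 := hpsd.dotProduct_mulVec_nonneg w
    have e : dotProduct (star w)
        ((Matrix.of fun i j : Fin (r - 1 + 1) => γ (2 * n0 + (i : ℕ) + (j : ℕ))) *ᵥ w)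
        = ∑ i : Fin (r - 1 + 1), ∑ j : Fin (r - 1 + 1),
            w i * w j * γ (2 * n0 + (i : ℕ) + (j : ℕ)) := by
      simp only [dotProduct, Matrix.mulVec, Pi.star_apply, star_trivial,
        Matrix.of_apply, Finset.mul_sum]
      exact Finset.sum_congr rfl fun i _ => Finset.sum_congr rfl fun j _ => by ring
    rw [e] at h2
    rw [hLsq]
    calc (0 : ℝ) ≤ ∑ i : Fin (r - 1 + 1), ∑ j : Fin (r - 1 + 1),
            w i * w j * γ (2 * n0 + (i : ℕ) + (j : ℕ)) := h2
      _ = hankelL γ (X ^ (2 * n0) * (q * q)) := by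
          conv_rhs => rw [hqsum]
          rw [hankelL_shift_mul]
  -- conclude
  intro n
  refine Matrix.posSemidef_iff_dotProduct_mulVec.mpr ⟨?_, ?_⟩
  · show _ = _
    ext i j
    simp only [Matrix.conjTranspose_apply, Matrix.of_apply, star_trivial]
    rw [Nat.add_comm]
  · intro v
    have e : dotProduct (star v)
        ((Matrix.of fun i j : Fin (n + 1) => γ ((i : ℕ) + (j : ℕ))) *ᵥ v)
        = ∑ i : Fin (n + 1), ∑ j : Fin (n + 1), v i * v j * γ ((i : ℕ) + (j : ℕ)) := by
      simp only [dotProduct, Matrix.mulVec, Pi.star_apply, star_trivial,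
        Matrix.of_apply, Finset.mul_sum]
      exact Finset.sum_congr rfl fun i _ => Finset.sum_congr rfl fun j _ => by ring
    rw [e]
    have hkey := key (∑ i : Fin (n + 1), monomial (i : ℕ) (v i))
    have e2 := hankelL_shift_mul γ 0 (n + 1) (n + 1) v v
    simp only [pow_zero, one_mul, zero_add] at e2
    rw [← e2]
    exact hkey
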